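/- (Non-asymptotic form of Theorem S.1.) Let H be a real symmetric matrix indexed by a finite type V with at least two elements, such that H_{u,v} ≤ 0 for all u ≠ v and |H_{u,v}| ≤ 1 for all u,v, and suppose each v ∈ V has at most D indices u ≠ v with H_{u,v} ≠ 0. Let φ : V → ℝ be a nonnegative unit eigenvector of H for its smallest eigenvalue λ₀(H). Let ε > 0 and S₀ := { u ∈ V : φ(u) < ε }; suppose the complement of S₀ has at most m elements, and Σ_{u ∈ S₀} φ(u)² ≥ μ and Σ_{u ∉ S₀} φ(u)² ≥ μ for some μ > 0. Then the spectral gap of H satisfies λ₁(H) − λ₀(H) ≤ 2·ε·D·m / μ, where λ₁(H) is the second-smallest eigenvalue of H counted with multiplicity. -/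

import Mathlib

open Matrix Finset RealInnerProductSpace

/-- The eigenvalues of a real symmetric matrix, counted with multiplicity and sorted in
increasing order; its first two entries are `λ₀(H)` and `λ₁(H)`. -/
noncomputable def sortedEigs {V : Type*} [Fintype V] [DecidableEq V] {H : Matrix V V ℝ}
    (hH : H.IsHermitian) : List ℝ :=
  Multiset.sort (Finset.univ.val.map hH.eigenvalues) (· ≤ ·)

lemma rayleigh_aux {V : Type*} [Fintype V] [DecidableEq V]
    (hcard : 2 ≤ Fintype.card V)
    {H : Matrix V V ℝ} (hH : H.IsHermitian)
    (φ g : V → ℝ) (hnorm : ∑ u, φ u ^ 2 = 1)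
    (heig : H.mulVec φ = ((sortedEigs hH).getD 0 0) • φ)
    (horth : ∑ u, φ u * g u = 0) :
    (sortedEigs hH).getD 1 0 * ∑ u, g u ^ 2 ≤ ∑ u, g u * H.mulVec g u := by
  have hsymm : ∀ u v, H u v = H v u := fun u v => by
    conv_lhs => rw [← hH.eq]
    simp [Matrix.conjTranspose_apply]
  -- basic facts about the sorted list
  set L := sortedEigs hH with hLdef
  have hLms : (L : Multiset ℝ) = Finset.univ.val.map hH.eigenvalues := Multiset.sort_eq _ _
  have hLsort : L.Pairwise (· ≤ ·) := Multiset.pairwise_sort _ _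
  have hLlen : L.length = Fintype.card V := by
    simpa [hLdef, sortedEigs] using Multiset.length_sort (α := ℝ) (· ≤ ·)
  obtain ⟨x, y, t, hLxy⟩ : ∃ x y t, L = x :: y :: t := by
    match L, hLlen with
    | [], h => simp at h; omega
    | [a], h => simp at h; omega
    | a :: b :: t, _ => exact ⟨a, b, t, rfl⟩
  have hx0 : L.getD 0 0 = x := by rw [hLxy]; rfl
  have hy1 : L.getD 1 0 = y := by rw [hLxy]; rfl
  rw [hLxy] at hLsort
  have hsort' := List.pairwise_cons.mp hLsort
  have hsort'' := List.pairwise_cons.mp hsort'.2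
  -- x is a lower bound for all eigenvalues
  have hmem : ∀ i, hH.eigenvalues i ∈ (x :: y :: t : List ℝ) := by
    intro i
    have : hH.eigenvalues i ∈ (L : Multiset ℝ) := by
      rw [hLms]; exact Multiset.mem_map_of_mem _ (Finset.mem_univ_val i)
    rw [hLxy] at this; exact this
  have hxle : ∀ i, x ≤ hH.eigenvalues i := by
    intro i
    rcases List.mem_cons.mp (hmem i) with h | h
    · exact h.ge
    · exact hsort'.1 _ h
  -- at most one eigenvalue index below y
  have hcount : (univ.filter (fun i => hH.eigenvalues i < y)).card ≤ 1 := by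
    have h1 : (univ.filter (fun i => hH.eigenvalues i < y)).card
        = Multiset.countP (fun z => z < y) (Finset.univ.val.map hH.eigenvalues) := by
      rw [Multiset.countP_map]
      rfl
    rw [h1, ← hLms, hLxy]
    have h2 : Multiset.countP (fun z => z < y) (↑(x :: y :: t) : Multiset ℝ)
        = List.countP (fun z => decide (z < y)) (x :: y :: t) := by
      simp [Multiset.coe_countP]
    rw [h2]
    have h3 : List.countP (fun z => decide (z < y)) (y :: t) = 0 := by
      rw [List.countP_eq_zero]
      intro z hz
      simp only [decide_eq_true_eq, not_lt]
      rcases List.mem_cons.mp hz with h | h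
      · exact h.ge
      · exact hsort''.1 _ h
    rw [List.countP_cons, h3]
    split <;> omega
  -- spectral decomposition
  have hinner : ∀ x y : EuclideanSpace ℝ V, ⟪x, y⟫ = ∑ u, x u * y u := fun x y => by
    simp [PiLp.inner_apply, RCLike.inner_apply, mul_comm]
  have key : ∀ a b : V → ℝ,
      (∑ i, (∑ u, hH.eigenvectorBasis i u * a u) * (∑ u, hH.eigenvectorBasis i u * b u))
        = ∑ u, a u * b u := by
    intro a b
    have h := hH.eigenvectorBasis.sum_inner_mul_inner
      (WithLp.toLp 2 a) (WithLp.toLp 2 b)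
    calc ∑ i, (∑ u, hH.eigenvectorBasis i u * a u) * (∑ u, hH.eigenvectorBasis i u * b u)
        = ∑ i, ⟪(WithLp.toLp 2 a), hH.eigenvectorBasis i⟫
            * ⟪hH.eigenvectorBasis i, (WithLp.toLp 2 b)⟫ := by
          refine Finset.sum_congr rfl fun i _ => ?_
          have e1 : ⟪(WithLp.toLp 2 a), hH.eigenvectorBasis i⟫
              = ∑ u, hH.eigenvectorBasis i u * a u := by
            rw [real_inner_comm]; exact hinner _ _
          have e2 : ⟪hH.eigenvectorBasis i, (WithLp.toLp 2 b)⟫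
              = ∑ u, hH.eigenvectorBasis i u * b u := hinner _ _
          rw [e1, e2]
      _ = ⟪(WithLp.toLp 2 a), (WithLp.toLp 2 b)⟫ := h
      _ = ∑ u, a u * b u := hinner _ _
  set d : V → ℝ := fun i => ∑ u, hH.eigenvectorBasis i u * φ u with hd
  set c : V → ℝ := fun i => ∑ u, hH.eigenvectorBasis i u * g u with hc
  have hmv : ∀ (i : V) (u : V), (∑ v, H u v * hH.eigenvectorBasis i v)
      = hH.eigenvalues i * hH.eigenvectorBasis i u := by
    intro i u
    exact congrFun (hH.mulVec_eigenvectorBasis i) u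
  have hbbHa : ∀ (i : V) (a : V → ℝ),
      ∑ u, hH.eigenvectorBasis i u * (H.mulVec a) u
        = hH.eigenvalues i * ∑ u, hH.eigenvectorBasis i u * a u := by
    intro i a
    calc ∑ u, hH.eigenvectorBasis i u * (H.mulVec a) u
        = ∑ u, ∑ v, hH.eigenvectorBasis i u * (H u v * a v) :=
          Finset.sum_congr rfl fun u _ => by
            rw [show (H.mulVec a) u = ∑ v, H u v * a v from rfl, Finset.mul_sum]
      _ = ∑ v, ∑ u, hH.eigenvectorBasis i u * (H u v * a v) := Finset.sum_comm
      _ = ∑ v, (∑ u, H v u * hH.eigenvectorBasis i u) * a v :=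
          Finset.sum_congr rfl fun v _ => by
            rw [Finset.sum_mul]
            exact Finset.sum_congr rfl fun u _ => by rw [hsymm u v]; ring
      _ = ∑ v, (hH.eigenvalues i * hH.eigenvectorBasis i v) * a v :=
          Finset.sum_congr rfl fun v _ => by rw [hmv i v]
      _ = hH.eigenvalues i * ∑ v, hH.eigenvectorBasis i v * a v := by
          rw [Finset.mul_sum]
          exact Finset.sum_congr rfl fun v _ => by ring
  rw [hx0] at heig
  have hdrel : ∀ i, (hH.eigenvalues i - x) * d i = 0 := by
    intro i
    have h1 : ∑ u, hH.eigenvectorBasis i u * (H.mulVec φ) u = hH.eigenvalues i * d i :=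
      hbbHa i φ
    have h2 : ∑ u, hH.eigenvectorBasis i u * (H.mulVec φ) u = x * d i := by
      rw [heig, hd, Finset.mul_sum]
      exact Finset.sum_congr rfl fun u _ => by
        simp only [Pi.smul_apply, smul_eq_mul]; ring
    rw [h1] at h2
    nlinarith [h2]
  have hd2 : ∑ i, d i ^ 2 = 1 := by
    have h := key φ φ
    calc ∑ i, d i ^ 2 = ∑ i, d i * d i := Finset.sum_congr rfl fun i _ => sq (d i)
      _ = ∑ u, φ u * φ u := h
      _ = ∑ u, φ u ^ 2 := Finset.sum_congr rfl fun u _ => (sq (φ u)).symm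
      _ = 1 := hnorm
  have hdc : ∑ i, d i * c i = 0 := by rw [hd, hc]; rw [key φ g]; exact horth
  have hc2 : ∑ i, c i ^ 2 = ∑ u, g u ^ 2 := by
    calc ∑ i, c i ^ 2 = ∑ i, c i * c i := Finset.sum_congr rfl fun i _ => sq (c i)
      _ = ∑ u, g u * g u := key g g
      _ = ∑ u, g u ^ 2 := Finset.sum_congr rfl fun u _ => (sq (g u)).symm
  have hQ : ∑ u, g u * (H.mulVec g) u = ∑ i, hH.eigenvalues i * c i ^ 2 := by
    have h := key g (H.mulVec g)
    rw [← h]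
    refine Finset.sum_congr rfl fun i _ => ?_
    rw [hbbHa i g]
    rw [hc]
    ring
  -- final inequality
  rw [hy1, ← hc2, hQ]
  have hkey : 0 ≤ ∑ i, (hH.eigenvalues i - y) * c i ^ 2 := by
    rcases Nat.le_one_iff_eq_zero_or_eq_one.mp hcount with h | h
    · have hall : ∀ i : V, ¬ hH.eigenvalues i < y := by
        intro i hi
        have : i ∈ univ.filter (fun i => hH.eigenvalues i < y) := by simp [hi]
        rw [Finset.card_eq_zero.mp h] at this
        exact absurd this (Finset.notMem_empty i)
      exact Finset.sum_nonneg fun i _ =>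
        mul_nonneg (by linarith [not_lt.mp (hall i)]) (sq_nonneg _)
    · obtain ⟨i0, hi0⟩ := Finset.card_eq_one.mp h
      have hi0mem : hH.eigenvalues i0 < y := by
        have : i0 ∈ univ.filter (fun i => hH.eigenvalues i < y) := by
          rw [hi0]; exact Finset.mem_singleton_self i0
        exact (Finset.mem_filter.mp this).2
      have hni : ∀ i, i ≠ i0 → y ≤ hH.eigenvalues i := by
        intro i hi
        by_contra hlt
        push_neg at hlt
        have : i ∈ univ.filter (fun i => hH.eigenvalues i < y) := by simp [hlt]
        rw [hi0] at this
        exact hi (Finset.mem_singleton.mp this)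
      have hxy' : x < y := lt_of_le_of_lt (hxle i0) hi0mem
      have hd0 : ∀ i, i ≠ i0 → d i = 0 := by
        intro i hi
        rcases mul_eq_zero.mp (hdrel i) with h' | h'
        · exfalso
          have h1 : y ≤ hH.eigenvalues i := hni i hi
          have h2 : hH.eigenvalues i = x := sub_eq_zero.mp h'
          linarith
        · exact h'
      have hdi02 : d i0 ^ 2 = 1 := by
        rw [← hd2]
        symm
        exact Finset.sum_eq_single_of_mem i0 (Finset.mem_univ i0)
          (fun i _ hi => by rw [hd0 i hi]; ring)
      have hdi0 : d i0 ≠ 0 := by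
        intro h'
        rw [h'] at hdi02
        norm_num at hdi02
      have hci0 : c i0 = 0 := by
        have h2 : ∑ i, d i * c i = d i0 * c i0 :=
          Finset.sum_eq_single_of_mem i0 (Finset.mem_univ i0)
            (fun i _ hi => by rw [hd0 i hi]; ring)
        rw [hdc] at h2
        rcases mul_eq_zero.mp h2.symm with h' | h'
        · exact absurd h' hdi0
        · exact h'
      refine Finset.sum_nonneg fun i _ => ?_
      by_cases hii : i = i0
      · subst hii; rw [hci0]; ring_nf; exact le_refl 0
      · exact mul_nonneg (by linarith [hni i hii]) (sq_nonneg _)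
  have hexp : ∑ i, (hH.eigenvalues i - y) * c i ^ 2
      = (∑ i, hH.eigenvalues i * c i ^ 2) - y * ∑ i, c i ^ 2 := by
    rw [Finset.mul_sum, ← Finset.sum_sub_distrib]
    exact Finset.sum_congr rfl fun i _ => by ring
  linarith [hexp ▸ hkey]

set_option maxHeartbeats 1600000 in
/-- non-asymptotic Theorem S.1: if a real symmetric stoquastic matrix `H`
(entries bounded by `1`, at most `D` nonzero off-diagonal entries per column) has a
nonnegative unit ground state `φ` such that `S₀ = {u : φ(u) < ε}` has complement of size at
most `m` and both `S₀` and its complement carry probability at least `μ`, then the spectral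
gap satisfies `λ₁(H) − λ₀(H) ≤ 2·ε·D·m/μ`. -/
theorem gap_bound_of_small_cheeger {V : Type*} [Fintype V] [DecidableEq V]
    (hcard : 2 ≤ Fintype.card V)
    (H : Matrix V V ℝ) (hH : H.IsHermitian)
    (hoff : ∀ u v : V, u ≠ v → H u v ≤ 0)
    (hbd : ∀ u v : V, |H u v| ≤ 1)
    (D : ℕ) (hdeg : ∀ v : V, (univ.filter fun u => u ≠ v ∧ H u v ≠ 0).card ≤ D)
    (φ : V → ℝ) (hpos : ∀ u, 0 ≤ φ u) (hnorm : ∑ u, φ u ^ 2 = 1)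
    (heig : H.mulVec φ = ((sortedEigs hH).getD 0 0) • φ)
    (ε : ℝ) (hε : 0 < ε)
    (m : ℕ) (hm : (univ.filter fun u => ¬ φ u < ε).card ≤ m)
    (μ : ℝ) (hμ : 0 < μ)
    (hS : μ ≤ ∑ u ∈ univ.filter fun u => φ u < ε, φ u ^ 2)
    (hSc : μ ≤ ∑ u ∈ univ.filter fun u => ¬ φ u < ε, φ u ^ 2) :
    (sortedEigs hH).getD 1 0 - (sortedEigs hH).getD 0 0 ≤ 2 * ε * D * m / μ := by
  classical
  have hsymm : ∀ u v, H u v = H v u := fun u v => by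
    conv_lhs => rw [← hH.eq]
    simp [Matrix.conjTranspose_apply]
  set β := ∑ u ∈ univ.filter fun u => φ u < ε, φ u ^ 2 with hβdef
  set α := ∑ u ∈ univ.filter fun u => ¬ φ u < ε, φ u ^ 2 with hαdef
  have hβ0 : 0 < β := lt_of_lt_of_le hμ hS
  have hα0 : 0 < α := lt_of_lt_of_le hμ hSc
  have hαβ : β + α = 1 := by
    rw [hβdef, hαdef, Finset.sum_filter_add_sum_filter_not]; exact hnorm
  set c : V → ℝ := fun u => if φ u < ε then α else -β with hcdef
  set g : V → ℝ := fun u => c u * φ u with hgdef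
  have hsplit : ∀ f : V → ℝ, ∑ u, f u
      = (∑ u ∈ univ.filter fun u => φ u < ε, f u)
        + ∑ u ∈ univ.filter fun u => ¬ φ u < ε, f u :=
    fun f => (Finset.sum_filter_add_sum_filter_not univ _ f).symm
  have hgS : ∀ u, φ u < ε → g u = α * φ u := fun u hu => by
    simp only [hgdef, hcdef]; rw [if_pos hu]
  have hgSc : ∀ u, ¬ φ u < ε → g u = -(β * φ u) := fun u hu => by
    simp only [hgdef, hcdef]; rw [if_neg hu]; ring
  have horth : ∑ u, φ u * g u = 0 := by
    rw [hsplit (fun u => φ u * g u)]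
    have h1 : ∑ u ∈ univ.filter (fun u => φ u < ε), φ u * g u = α * β := by
      rw [hβdef, Finset.mul_sum]
      refine Finset.sum_congr rfl fun u hu => ?_
      rw [hgS u (Finset.mem_filter.mp hu).2]; ring
    have h2 : ∑ u ∈ univ.filter (fun u => ¬ φ u < ε), φ u * g u = -(β * α) := by
      rw [hαdef, Finset.mul_sum, ← Finset.sum_neg_distrib]
      refine Finset.sum_congr rfl fun u hu => ?_
      rw [hgSc u (Finset.mem_filter.mp hu).2]; ring
    rw [h1, h2]; ring
  have hg2 : ∑ u, g u ^ 2 = α * β := by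
    rw [hsplit (fun u => g u ^ 2)]
    have h1 : ∑ u ∈ univ.filter (fun u => φ u < ε), g u ^ 2 = α ^ 2 * β := by
      rw [hβdef, Finset.mul_sum]
      refine Finset.sum_congr rfl fun u hu => ?_
      rw [hgS u (Finset.mem_filter.mp hu).2]; ring
    have h2 : ∑ u ∈ univ.filter (fun u => ¬ φ u < ε), g u ^ 2 = β ^ 2 * α := by
      rw [hαdef, Finset.mul_sum]
      refine Finset.sum_congr rfl fun u hu => ?_
      rw [hgSc u (Finset.mem_filter.mp hu).2]; ring
    rw [h1, h2]
    calc α ^ 2 * β + β ^ 2 * α = α * β * (β + α) := by ring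
      _ = α * β := by rw [hαβ]; ring
  have hray := rayleigh_aux hcard hH φ g hnorm heig horth
  -- pointwise eigen relation
  have hEig : ∀ u, ∑ v, H u v * φ v = (sortedEigs hH).getD 0 0 * φ u := by
    intro u
    have h := congrFun heig u
    rw [show (H.mulVec φ) u = ∑ v, H u v * φ v from rfl] at h
    simpa using h
  -- three double-sum identities
  have hA : ∑ u, ∑ v, H u v * (φ u * φ v) * c u ^ 2
      = (sortedEigs hH).getD 0 0 * ∑ u, g u ^ 2 := by
    calc ∑ u, ∑ v, H u v * (φ u * φ v) * c u ^ 2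
        = ∑ u, (φ u * c u ^ 2) * ∑ v, H u v * φ v := by
          refine Finset.sum_congr rfl fun u _ => ?_
          rw [Finset.mul_sum]
          exact Finset.sum_congr rfl fun v _ => by ring
      _ = ∑ u, (φ u * c u ^ 2) * ((sortedEigs hH).getD 0 0 * φ u) :=
          Finset.sum_congr rfl fun u _ => by rw [hEig u]
      _ = (sortedEigs hH).getD 0 0 * ∑ u, g u ^ 2 := by
          rw [Finset.mul_sum]
          exact Finset.sum_congr rfl fun u _ => by simp only [hgdef]; ring
  have hB : ∑ u, ∑ v, H u v * (φ u * φ v) * c v ^ 2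
      = (sortedEigs hH).getD 0 0 * ∑ u, g u ^ 2 := by
    rw [Finset.sum_comm]
    calc ∑ v, ∑ u, H u v * (φ u * φ v) * c v ^ 2
        = ∑ v, (φ v * c v ^ 2) * ∑ u, H v u * φ u := by
          refine Finset.sum_congr rfl fun v _ => ?_
          rw [Finset.mul_sum]
          exact Finset.sum_congr rfl fun u _ => by rw [hsymm u v]; ring
      _ = ∑ v, (φ v * c v ^ 2) * ((sortedEigs hH).getD 0 0 * φ v) :=
          Finset.sum_congr rfl fun v _ => by rw [hEig v]
      _ = (sortedEigs hH).getD 0 0 * ∑ u, g u ^ 2 := by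
          rw [Finset.mul_sum]
          exact Finset.sum_congr rfl fun v _ => by simp only [hgdef]; ring
  have hC : ∑ u, ∑ v, H u v * (φ u * φ v) * (c u * c v) = ∑ u, g u * H.mulVec g u := by
    refine Finset.sum_congr rfl fun u _ => ?_
    rw [show (H.mulVec g) u = ∑ v, H u v * g v from rfl, Finset.mul_sum]
    exact Finset.sum_congr rfl fun v _ => by simp only [hgdef]; ring
  have hkey2 : ∑ u, ∑ v, (-(H u v)) * (φ u * φ v) * (c u - c v) ^ 2
      = 2 * (∑ u, g u * H.mulVec g u)
        - 2 * ((sortedEigs hH).getD 0 0 * ∑ u, g u ^ 2) := by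
    have expand : ∀ u v : V, (-(H u v)) * (φ u * φ v) * (c u - c v) ^ 2
        = 2 * (H u v * (φ u * φ v) * (c u * c v)) - H u v * (φ u * φ v) * c u ^ 2
          - H u v * (φ u * φ v) * c v ^ 2 := fun u v => by ring
    calc ∑ u, ∑ v, (-(H u v)) * (φ u * φ v) * (c u - c v) ^ 2
        = ∑ u, ∑ v, (2 * (H u v * (φ u * φ v) * (c u * c v))
            - H u v * (φ u * φ v) * c u ^ 2 - H u v * (φ u * φ v) * c v ^ 2) :=
          Finset.sum_congr rfl fun u _ => Finset.sum_congr rfl fun v _ => expand u v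
      _ = 2 * (∑ u, ∑ v, H u v * (φ u * φ v) * (c u * c v))
            - (∑ u, ∑ v, H u v * (φ u * φ v) * c u ^ 2)
            - ∑ u, ∑ v, H u v * (φ u * φ v) * c v ^ 2 := by
          simp only [Finset.sum_sub_distrib, ← Finset.mul_sum]
      _ = 2 * (∑ u, g u * H.mulVec g u)
            - 2 * ((sortedEigs hH).getD 0 0 * ∑ u, g u ^ 2) := by
          rw [hA, hB, hC]; ring
  -- pointwise bound on the quadratic form terms
  have hφ1 : ∀ u, φ u ≤ 1 := by
    intro u
    have h1 : φ u ^ 2 ≤ 1 := by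
      rw [← hnorm]
      exact Finset.single_le_sum (f := fun u => φ u ^ 2) (fun i _ => sq_nonneg _)
        (Finset.mem_univ u)
    nlinarith [hpos u]
  set F : V → V → ℝ := fun u v =>
    (if (¬ φ u < ε) ∧ u ≠ v ∧ H u v ≠ 0 then ε else 0)
      + (if (¬ φ v < ε) ∧ u ≠ v ∧ H u v ≠ 0 then ε else 0) with hFdef
  have hF0 : ∀ u v, 0 ≤ F u v := by
    intro u v
    simp only [hFdef]
    have h1 : (0:ℝ) ≤ if (¬ φ u < ε) ∧ u ≠ v ∧ H u v ≠ 0 then ε else 0 := by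
      split <;> [exact le_of_lt hε; exact le_refl 0]
    have h2 : (0:ℝ) ≤ if (¬ φ v < ε) ∧ u ≠ v ∧ H u v ≠ 0 then ε else 0 := by
      split <;> [exact le_of_lt hε; exact le_refl 0]
    linarith
  have hterm : ∀ u v, (-(H u v)) * (φ u * φ v) * (c u - c v) ^ 2 ≤ F u v := by
    intro u v
    by_cases hiff : (φ u < ε ↔ φ v < ε)
    · have hcc : c u = c v := by
        simp only [hcdef]
        by_cases h : φ u < ε
        · rw [if_pos h, if_pos (hiff.mp h)]
        · rw [if_neg h, if_neg (fun h' => h (hiff.mpr h'))]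
      have : (-(H u v)) * (φ u * φ v) * (c u - c v) ^ 2 = 0 := by rw [hcc]; ring
      rw [this]; exact hF0 u v
    · have huv : u ≠ v := fun h => hiff (h ▸ Iff.rfl)
      by_cases hH0 : H u v = 0
      · have : (-(H u v)) * (φ u * φ v) * (c u - c v) ^ 2 = 0 := by rw [hH0]; ring
        rw [this]; exact hF0 u v
      · have h1 : (c u - c v) ^ 2 = 1 := by
          simp only [hcdef]
          by_cases h : φ u < ε
          · have h2 : ¬ φ v < ε := fun h' => hiff ⟨fun _ => h', fun _ => h⟩
            rw [if_pos h, if_neg h2]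
            nlinarith [hαβ]
          · have h2 : φ v < ε := by
              by_contra h2
              exact hiff ⟨fun a => absurd a h, fun a => absurd a h2⟩
            rw [if_neg h, if_pos h2]
            nlinarith [hαβ]
        have h2 : φ u * φ v ≤ ε := by
          by_cases h : φ u < ε
          · calc φ u * φ v ≤ ε * 1 :=
                mul_le_mul h.le (hφ1 v) (hpos v) hε.le
              _ = ε := mul_one ε
          · have h3 : φ v < ε := by
              by_contra h3
              exact hiff ⟨fun a => absurd a h, fun a => absurd a h3⟩
            calc φ u * φ v ≤ 1 * ε :=
                mul_le_mul (hφ1 u) h3.le (hpos v) zero_le_one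
              _ = ε := one_mul ε
        have h3 : 0 ≤ -(H u v) := by linarith [hoff u v huv]
        have h4 : -(H u v) ≤ 1 := by
          have := abs_le.mp (hbd u v); linarith [this.1]
        have h5 : ε ≤ F u v := by
          simp only [hFdef]
          by_cases h : φ u < ε
          · have hv : ¬ φ v < ε := fun h' => hiff ⟨fun _ => h', fun _ => h⟩
            rw [if_neg (fun hc => hc.1 h), if_pos ⟨hv, huv, hH0⟩]
            linarith
          · rw [if_pos ⟨h, huv, hH0⟩]
            have h6 : (0:ℝ) ≤ if (¬ φ v < ε) ∧ u ≠ v ∧ H u v ≠ 0 then ε else 0 := by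
              split <;> [exact le_of_lt hε; exact le_refl 0]
            linarith
        have h7 : 0 ≤ φ u * φ v := mul_nonneg (hpos u) (hpos v)
        calc (-(H u v)) * (φ u * φ v) * (c u - c v) ^ 2
            = (-(H u v)) * (φ u * φ v) := by rw [h1]; ring
          _ ≤ 1 * ε := mul_le_mul h4 h2 h7 zero_le_one
          _ = ε := one_mul ε
          _ ≤ F u v := h5
  -- counting bound
  have hcast : ((univ.filter fun u => ¬ φ u < ε).card : ℝ) ≤ (m : ℝ) := Nat.cast_le.mpr hm
  have hsum1 : ∑ u, ∑ v, (if (¬ φ u < ε) ∧ u ≠ v ∧ H u v ≠ 0 then ε else 0)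
      ≤ ε * D * m := by
    have hdeg' : ∀ u : V, ((univ.filter fun v => u ≠ v ∧ H u v ≠ 0).card : ℝ) ≤ (D : ℝ) := by
      intro u
      have he : (univ.filter fun v => u ≠ v ∧ H u v ≠ 0)
          = (univ.filter fun v => v ≠ u ∧ H v u ≠ 0) := by
        refine Finset.filter_congr fun v _ => ?_
        rw [hsymm u v, ne_comm]
      rw [he]
      exact Nat.cast_le.mpr (hdeg u)
    calc ∑ u, ∑ v, (if (¬ φ u < ε) ∧ u ≠ v ∧ H u v ≠ 0 then ε else 0)
        ≤ ∑ u, (if ¬ φ u < ε then ε * D else 0) := by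
          refine Finset.sum_le_sum fun u _ => ?_
          by_cases h : ¬ φ u < ε
          · rw [if_pos h]
            have he : ∀ v, (if (¬ φ u < ε) ∧ u ≠ v ∧ H u v ≠ 0 then ε else 0)
                = (if u ≠ v ∧ H u v ≠ 0 then ε else 0) := by
              intro v; simp [h]
            rw [Finset.sum_congr rfl fun v _ => he v, Finset.sum_ite,
              Finset.sum_const, Finset.sum_const_zero, add_zero, nsmul_eq_mul]
            have h9 := mul_le_mul_of_nonneg_right (hdeg' u) hε.le
            linarith
          · rw [if_neg h]
            push_neg at h
            have he : ∀ v, (if (¬ φ u < ε) ∧ u ≠ v ∧ H u v ≠ 0 then ε else 0) = 0 := by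
              intro v
              rw [if_neg (fun hc => hc.1 h)]
            rw [Finset.sum_congr rfl fun v _ => he v, Finset.sum_const_zero]
      _ = ((univ.filter fun u => ¬ φ u < ε).card : ℝ) * (ε * D) := by
          rw [Finset.sum_ite, Finset.sum_const, Finset.sum_const_zero, add_zero,
            nsmul_eq_mul]
      _ ≤ ε * D * m := by
          have h0 : (0:ℝ) ≤ ε * D := by positivity
          nlinarith [hcast]
  have hsum2 : ∑ u, ∑ v, (if (¬ φ v < ε) ∧ u ≠ v ∧ H u v ≠ 0 then ε else 0)
      ≤ ε * D * m := by
    rw [Finset.sum_comm]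
    calc ∑ v, ∑ u, (if (¬ φ v < ε) ∧ u ≠ v ∧ H u v ≠ 0 then ε else 0)
        ≤ ∑ v, (if ¬ φ v < ε then ε * D else 0) := by
          refine Finset.sum_le_sum fun v _ => ?_
          by_cases h : ¬ φ v < ε
          · rw [if_pos h]
            have he : ∀ u, (if (¬ φ v < ε) ∧ u ≠ v ∧ H u v ≠ 0 then ε else 0)
                = (if u ≠ v ∧ H u v ≠ 0 then ε else 0) := by
              intro u; simp [h]
            rw [Finset.sum_congr rfl fun u _ => he u, Finset.sum_ite,
              Finset.sum_const, Finset.sum_const_zero, add_zero, nsmul_eq_mul]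
            have h9 := mul_le_mul_of_nonneg_right ((Nat.cast_le (α := ℝ)).mpr (hdeg v)) hε.le
            linarith
          · rw [if_neg h]
            push_neg at h
            have he : ∀ u, (if (¬ φ v < ε) ∧ u ≠ v ∧ H u v ≠ 0 then ε else 0) = 0 := by
              intro u
              rw [if_neg (fun hc => hc.1 h)]
            rw [Finset.sum_congr rfl fun u _ => he u, Finset.sum_const_zero]
      _ = ((univ.filter fun v => ¬ φ v < ε).card : ℝ) * (ε * D) := by
          rw [Finset.sum_ite, Finset.sum_const, Finset.sum_const_zero, add_zero,
            nsmul_eq_mul]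
      _ ≤ ε * D * m := by
          have h0 : (0:ℝ) ≤ ε * D := by positivity
          nlinarith [hcast]
  have htot : ∑ u, ∑ v, (-(H u v)) * (φ u * φ v) * (c u - c v) ^ 2 ≤ 2 * (ε * D * m) := by
    calc ∑ u, ∑ v, (-(H u v)) * (φ u * φ v) * (c u - c v) ^ 2
        ≤ ∑ u, ∑ v, F u v :=
          Finset.sum_le_sum fun u _ => Finset.sum_le_sum fun v _ => hterm u v
      _ = (∑ u, ∑ v, (if (¬ φ u < ε) ∧ u ≠ v ∧ H u v ≠ 0 then ε else 0))
          + ∑ u, ∑ v, (if (¬ φ v < ε) ∧ u ≠ v ∧ H u v ≠ 0 then ε else 0) := by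
          simp only [hFdef, Finset.sum_add_distrib]
      _ ≤ 2 * (ε * D * m) := by linarith [hsum1, hsum2]
  -- put everything together
  have hQle : (sortedEigs hH).getD 1 0 * (α * β)
      ≤ (sortedEigs hH).getD 0 0 * (α * β) + ε * D * m := by
    rw [← hg2]
    have := hkey2 ▸ htot
    linarith [hray, this]
  have hab : μ / 2 ≤ α * β := by
    nlinarith [mul_nonneg (sub_nonneg.mpr hSc) hβ0.le, mul_nonneg (sub_nonneg.mpr hS) hα0.le]
  have hgoal : ((sortedEigs hH).getD 1 0 - (sortedEigs hH).getD 0 0) * μ ≤ 2 * ε * D * m := by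
    have hεDm : (0:ℝ) ≤ ε * D * m := by positivity
    rcases le_or_gt ((sortedEigs hH).getD 1 0 - (sortedEigs hH).getD 0 0) 0 with h | h
    · have h9 := mul_nonpos_of_nonpos_of_nonneg h hμ.le
      linarith
    · have h9 := mul_le_mul_of_nonneg_left hab h.le
      nlinarith [hQle, h9]
  rw [le_div_iff₀ hμ]
  linarith [hgoal]
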